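/- If ψ ∈ H_L satisfies U_trl ψ = e^{iq} ψ and S^z_T ψ = M ψ, then U_trl (U^tw_{±2π} ψ) = exp(i(q ∓ 2πM/L + 2πS)) · (U^tw_{±2π} ψ) and S^z_T (U^tw_{±2π} ψ) = M (U^tw_{±2π} ψ); i.e., twisting shifts the wavenumber by ∓2πM/L + 2πS while preserving the magnetization. -/

import Mathlib

open scoped BigOperators Matrix
open Fin.NatCast
noncomputable section

namespace LSM

/-- Number of basis states per site: `2S+1`. -/
abbrev N (twoS : ℕ) : ℕ := twoS + 1

/-- The spin value `S` as a real number (so `2S = twoS`). -/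
def spin (twoS : ℕ) : ℝ := (twoS : ℝ) / 2

/-- The `S^z`-value of the `k`-th basis vector: `m = S - k`, `k = 0, …, 2S`. -/
def mval (twoS : ℕ) (k : Fin (N twoS)) : ℝ := spin twoS - (k : ℕ)

/-- Single-site `S^z` matrix. -/
def SzMat (twoS : ℕ) : Matrix (Fin (N twoS)) (Fin (N twoS)) ℂ :=
  Matrix.diagonal fun k => (mval twoS k : ℂ)

/-- Single-site raising operator `S^+`. -/
def SpMat (twoS : ℕ) : Matrix (Fin (N twoS)) (Fin (N twoS)) ℂ :=
  Matrix.of fun a b =>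
    if (a : ℕ) + 1 = (b : ℕ) then
      ((Real.sqrt (spin twoS * (spin twoS + 1) - mval twoS b * (mval twoS b + 1)) : ℝ) : ℂ)
    else 0

/-- Single-site lowering operator `S^-`. -/
def SmMat (twoS : ℕ) : Matrix (Fin (N twoS)) (Fin (N twoS)) ℂ :=
  Matrix.of fun a b =>
    if (a : ℕ) = (b : ℕ) + 1 then
      ((Real.sqrt (spin twoS * (spin twoS + 1) - mval twoS b * (mval twoS b - 1)) : ℝ) : ℂ)
    else 0

/-- Single-site `S^y = (S^+ - S^-)/(2i)`. -/
def SyMat (twoS : ℕ) : Matrix (Fin (N twoS)) (Fin (N twoS)) ℂ :=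
  ((2 : ℂ) * Complex.I)⁻¹ • (SpMat twoS - SmMat twoS)

/-- Single-site `S^x = (S^+ + S^-)/2`. -/
def SxMat (twoS : ℕ) : Matrix (Fin (N twoS)) (Fin (N twoS)) ℂ :=
  ((2 : ℂ))⁻¹ • (SpMat twoS + SmMat twoS)

/-- Configurations (product basis labels) of the chain of length `L`. -/
abbrev Conf (twoS L : ℕ) := Fin L → Fin (N twoS)

/-- Operators on the chain Hilbert space `⊗_{j=1}^L ℂ^{2S+1}`, as matrices in the
product basis. -/
abbrev Op (twoS L : ℕ) := Matrix (Conf twoS L) (Conf twoS L) ℂ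

/-- The single-site matrix `A` acting on the `j`-th tensor factor (identity elsewhere). -/
def site (twoS L : ℕ) (j : Fin L) (A : Matrix (Fin (N twoS)) (Fin (N twoS)) ℂ) :
    Op twoS L :=
  Matrix.of fun x y => if ∀ i, i ≠ j → x i = y i then A (x j) (y j) else 0

/-- Total `S^z`. -/
def SzT (twoS L : ℕ) : Op twoS L := ∑ j : Fin L, site twoS L j (SzMat twoS)

/-- Total `S^y`. -/
def SyT (twoS L : ℕ) : Op twoS L := ∑ j : Fin L, site twoS L j (SyMat twoS)

/-- Translation by one site: the permutation matrix with
`Utrl† A_j Utrl = A_{j+1}` for every single-site operator `A`. -/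
def Utrl (twoS L : ℕ) [NeZero L] : Op twoS L :=
  Matrix.of fun x y => if x = (fun i => y (i + 1)) then 1 else 0

/-- Site parity (space inversion `j ↦ L - j = -j (mod L)`): the permutation matrix with
`P† A_j P = A_{L-j}` for every single-site operator `A`. -/
def Pop (twoS L : ℕ) [NeZero L] : Op twoS L :=
  Matrix.of fun x y => if x = (fun i => y (-i)) then 1 else 0

/-- Link parity `P_link = P U_trl`. -/
def Plink (twoS L : ℕ) [NeZero L] : Op twoS L := Pop twoS L * Utrl twoS L

/-- The generalized XXZ Hamiltonian with periodic boundary conditions. -/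
def Ham (twoS L : ℕ) [NeZero L] (J Δ : ℕ → ℝ) (h : ℝ) : Op twoS L :=
  (∑ j : Fin L, ∑ r ∈ Finset.Icc 1 (L / 2),
      ((((J r : ℝ) : ℂ) / 2) •
        (site twoS L j (SpMat twoS) * site twoS L (j + (r : Fin L)) (SmMat twoS) +
          site twoS L j (SmMat twoS) * site twoS L (j + (r : Fin L)) (SpMat twoS)) +
      ((Δ r : ℝ) : ℂ) •
        (site twoS L j (SzMat twoS) * site twoS L (j + (r : Fin L)) (SzMat twoS)))) +
    (h : ℂ) • SzT twoS L

/-- The generator `Σ_{j=1}^{L} j (S^z_j - S)` of the (site-centered) twist. -/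
def twistGen (twoS L : ℕ) [NeZero L] : Op twoS L :=
  ∑ j ∈ Finset.Icc 1 L,
    (j : ℂ) • site twoS L ((j : ℕ) : Fin L) (SzMat twoS - ((spin twoS : ℝ) : ℂ) • 1)

/-- The twist operator `U^tw_{ε·2π} = exp(-ε (2πi/L) Σ_j j (S^z_j - S))`, `ε = ±1`. -/
def Utw (twoS L : ℕ) [NeZero L] (ε : ℝ) : Op twoS L :=
  NormedSpace.exp ((-(ε : ℂ) * ((2 * Real.pi / L : ℝ) : ℂ) * Complex.I) • twistGen twoS L)

/-- The generator `Σ_{j=1}^{L} (j - 1/2)(S^z_j - S)` of the link-centered twist. -/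
def twistGenL (twoS L : ℕ) [NeZero L] : Op twoS L :=
  ∑ j ∈ Finset.Icc 1 L,
    ((j : ℂ) - 1 / 2) • site twoS L ((j : ℕ) : Fin L) (SzMat twoS - ((spin twoS : ℝ) : ℂ) • 1)

/-- The link-centered twist operator `U^twl_{ε·2π}`, `ε = ±1`. -/
def UtwL (twoS L : ℕ) [NeZero L] (ε : ℝ) : Op twoS L :=
  NormedSpace.exp ((-(ε : ℂ) * ((2 * Real.pi / L : ℝ) : ℂ) * Complex.I) • twistGenL twoS L)

/-- The spin-reversal operator `U^y_π = exp(-iπ S^y_T)`. -/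
def Uy (twoS L : ℕ) : Op twoS L :=
  NormedSpace.exp ((-Complex.I * ((Real.pi : ℝ) : ℂ)) • SyT twoS L)

/-- The sector `V(M, q)` of simultaneous eigenvectors of `S^z_T` (eigenvalue `M`) and of
the translation `U_trl` (eigenvalue `e^{iq}`). -/
def Vsp (twoS L : ℕ) [NeZero L] (M q : ℝ) : Submodule ℂ (Conf twoS L → ℂ) :=
  Module.End.eigenspace (Matrix.mulVecLin (SzT twoS L)) ((M : ℝ) : ℂ) ⊓
    Module.End.eigenspace (Matrix.mulVecLin (Utrl twoS L)) (Complex.exp (Complex.I * q))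

/-- `E(M; q)`: the smallest eigenvalue of `H` restricted to the sector `V(M,q)`. -/
def En (twoS L : ℕ) [NeZero L] (J Δ : ℕ → ℝ) (h : ℝ) (M q : ℝ) : ℝ :=
  sInf {E : ℝ | ∃ ψ ∈ Vsp twoS L M q, ψ ≠ 0 ∧
    (Ham twoS L J Δ h).mulVec ψ = ((E : ℝ) : ℂ) • ψ}

/-- The expectation value `⟨ψ, A ψ⟩`. -/
def expVal (twoS L : ℕ) (A : Op twoS L) (ψ : Conf twoS L → ℂ) : ℂ :=
  dotProduct (star ψ) (A.mulVec ψ)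

/-- `q` belongs to the lattice `(2π/L)ℤ` of allowed wavenumbers. -/
def allowedQ (L : ℕ) (q : ℝ) : Prop := ∃ k : ℤ, q = 2 * Real.pi * k / L


/-! ### Auxiliary lemmas for Statement 5 -/

lemma diagonal_sum' {ι κ : Type*} [Fintype ι] [DecidableEq ι] (s : Finset κ) (f : κ → ι → ℂ) :
    ∑ k ∈ s, Matrix.diagonal (f k) = Matrix.diagonal (fun i => ∑ k ∈ s, f k i) := by
  ext i j
  by_cases h : i = j
  · subst h; simp [Matrix.sum_apply]
  · simp [Matrix.sum_apply, Matrix.diagonal_apply_ne _ h]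

lemma diagonal_smul' {ι : Type*} [Fintype ι] [DecidableEq ι] (c : ℂ) (v : ι → ℂ) :
    c • Matrix.diagonal v = Matrix.diagonal (fun i => c * v i) := by
  ext i j
  by_cases h : i = j
  · subst h; simp
  · simp [Matrix.diagonal_apply_ne _ h]

lemma site_diagonal (twoS L : ℕ) (j : Fin L) (d : Fin (N twoS) → ℂ) :
    site twoS L j (Matrix.diagonal d) = Matrix.diagonal (fun x : Conf twoS L => d (x j)) := by
  ext x y
  simp only [site, Matrix.of_apply]
  by_cases h : ∀ i, i ≠ j → x i = y i
  · rw [if_pos h]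
    by_cases hxy : x = y
    · subst hxy; simp
    · have hxj : x j ≠ y j := by
        intro hj
        apply hxy; funext i
        by_cases hi : i = j
        · subst hi; exact hj
        · exact h i hi
      rw [Matrix.diagonal_apply_ne _ hxj, Matrix.diagonal_apply_ne _ hxy]
  · have hxy : x ≠ y := by rintro rfl; exact h fun i _ => rfl
    simp [h, Matrix.diagonal_apply_ne _ hxy]

/-- The diagonal entry of total `S^z`. -/
def Gf (twoS L : ℕ) (x : Conf twoS L) : ℂ := ∑ i : Fin L, ((mval twoS (x i) : ℝ) : ℂ)

lemma szT_diag (twoS L : ℕ) : SzT twoS L = Matrix.diagonal (Gf twoS L) := by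
  have h : SzT twoS L
      = ∑ j : Fin L, Matrix.diagonal (fun x : Conf twoS L => ((mval twoS (x j) : ℝ) : ℂ)) :=
    Finset.sum_congr rfl fun j _ => site_diagonal twoS L j _
  rw [h, diagonal_sum']
  rfl

/-- The diagonal entry of the twist generator. -/
def Ff (twoS L : ℕ) [NeZero L] (x : Conf twoS L) : ℂ :=
  ∑ j ∈ Finset.Icc 1 L,
    (j : ℂ) * (((mval twoS (x ((j : ℕ) : Fin L)) : ℝ) : ℂ) - ((spin twoS : ℝ) : ℂ))

lemma smat_sub_diag (twoS : ℕ) :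
    SzMat twoS - ((spin twoS : ℝ) : ℂ) • 1 =
      Matrix.diagonal (fun k : Fin (N twoS) =>
        ((mval twoS k : ℝ) : ℂ) - ((spin twoS : ℝ) : ℂ)) := by
  ext i j
  by_cases h : i = j
  · subst h; simp [SzMat, Matrix.one_apply]
  · simp [SzMat, Matrix.diagonal_apply_ne _ h, Matrix.one_apply_ne h]

lemma twistGen_diag (twoS L : ℕ) [NeZero L] :
    twistGen twoS L = Matrix.diagonal (Ff twoS L) := by
  have h : twistGen twoS L = ∑ j ∈ Finset.Icc 1 L,
      Matrix.diagonal (fun x : Conf twoS L =>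
        (j : ℂ) * (((mval twoS (x ((j : ℕ) : Fin L)) : ℝ) : ℂ) - ((spin twoS : ℝ) : ℂ))) := by
    refine Finset.sum_congr rfl fun j _ => ?_
    rw [smat_sub_diag, site_diagonal, diagonal_smul']
  rw [h, diagonal_sum']
  rfl

lemma utw_diag (twoS L : ℕ) [NeZero L] (ε : ℝ) :
    Utw twoS L ε = Matrix.diagonal (fun x : Conf twoS L =>
      Complex.exp ((-(ε : ℂ) * ((2 * Real.pi / L : ℝ) : ℂ) * Complex.I) * Ff twoS L x)) := by
  rw [Utw, twistGen_diag, diagonal_smul', Matrix.exp_diagonal]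
  have hfun : (NormedSpace.exp fun x : Conf twoS L =>
        (-(ε : ℂ) * ((2 * Real.pi / L : ℝ) : ℂ) * Complex.I) * Ff twoS L x)
      = fun x : Conf twoS L =>
        Complex.exp ((-(ε : ℂ) * ((2 * Real.pi / L : ℝ) : ℂ) * Complex.I) * Ff twoS L x) := by
    funext x
    rw [Pi.coe_exp, ← Complex.exp_eq_exp_ℂ]
  rw [hfun]

lemma utrl_mulVec (twoS L : ℕ) [NeZero L] (φ : Conf twoS L → ℂ) (x : Conf twoS L) :
    (Utrl twoS L).mulVec φ x = φ (fun i => x (i - 1)) := by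
  simp only [Utrl, Matrix.mulVec, dotProduct, Matrix.of_apply]
  have key : ∀ y : Conf twoS L, (x = fun i => y (i + 1)) ↔ y = (fun i => x (i - 1)) := by
    intro y
    constructor
    · intro h; funext i
      have h2 := congrFun h (i - 1)
      rw [sub_add_cancel] at h2
      exact h2.symm
    · intro h; subst h; funext i; simp
  simp_rw [key, ite_mul, one_mul, zero_mul]
  classical
  calc (∑ y : Conf twoS L, if y = (fun i => x (i - 1)) then φ y else 0)
      = φ (fun i => x (i - 1)) := by
        rw [Finset.sum_ite_eq' Finset.univ (fun i => x (i - 1)) φ]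
        simp

lemma Ff_shift (twoS L : ℕ) [NeZero L] (x : Conf twoS L) :
    Ff twoS L (fun i => x (i - 1)) =
      Ff twoS L x + Gf twoS L x - (L : ℂ) * ((spin twoS : ℝ) : ℂ)
        - (L : ℂ) * (((mval twoS (x 0) : ℝ) : ℂ) - ((spin twoS : ℝ) : ℂ)) := by
  classical
  set g : Fin L → ℂ := fun i => ((mval twoS (x i) : ℝ) : ℂ) - ((spin twoS : ℝ) : ℂ) with hg
  have hIcc : ∀ f : ℕ → ℂ, ∑ j ∈ Finset.Icc 1 L, f j = ∑ k ∈ Finset.range L, f (1 + k) := by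
    intro f
    rw [← Finset.Ico_add_one_right_eq_Icc, Finset.sum_Ico_eq_sum_range]
    norm_num
  have hrange : ∑ k ∈ Finset.range L, g ((k : ℕ) : Fin L) = ∑ i : Fin L, g i := by
    rw [← Fin.sum_univ_eq_sum_range (fun k => g ((k : ℕ) : Fin L)) L]
    exact Finset.sum_congr rfl fun i _ => by rw [Fin.cast_val_eq_self]
  have hL0 : ((L : ℕ) : Fin L) = 0 := Fin.natCast_self L
  -- the shifted sum
  have h1 : Ff twoS L (fun i => x (i - 1))
      = ∑ j ∈ Finset.Icc 1 L, (j : ℂ) * g (((j : ℕ) : Fin L) - 1) := rfl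
  have h2 : Ff twoS L x = ∑ j ∈ Finset.Icc 1 L, (j : ℂ) * g ((j : ℕ) : Fin L) := rfl
  -- claim 2 : shifted sum
  have hc2 : ∑ j ∈ Finset.Icc 1 L, (j : ℂ) * g (((j : ℕ) : Fin L) - 1)
      = (∑ k ∈ Finset.range L, (k : ℂ) * g ((k : ℕ) : Fin L)) + ∑ i : Fin L, g i := by
    rw [hIcc]
    have : ∀ k : ℕ, (((1 + k : ℕ) : Fin L) - 1) = ((k : ℕ) : Fin L) := by
      intro k
      push_cast
      abel
    calc ∑ k ∈ Finset.range L, ((1 + k : ℕ) : ℂ) * g (((1 + k : ℕ) : Fin L) - 1)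
        = ∑ k ∈ Finset.range L, (((k : ℂ) * g ((k : ℕ) : Fin L)) + g ((k : ℕ) : Fin L)) := by
          refine Finset.sum_congr rfl fun k _ => ?_
          rw [this k]
          push_cast
          ring
      _ = (∑ k ∈ Finset.range L, (k : ℂ) * g ((k : ℕ) : Fin L))
            + ∑ k ∈ Finset.range L, g ((k : ℕ) : Fin L) := Finset.sum_add_distrib
      _ = _ := by rw [hrange]
  -- claim 1 : unshifted sum
  have hc1 : ∑ j ∈ Finset.Icc 1 L, (j : ℂ) * g ((j : ℕ) : Fin L)
      = (∑ k ∈ Finset.range L, (k : ℂ) * g ((k : ℕ) : Fin L)) + (L : ℂ) * g 0 := by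
    rw [hIcc]
    set f : ℕ → ℂ := fun k => (k : ℂ) * g ((k : ℕ) : Fin L) with hf
    have e1 : ∑ k ∈ Finset.range (L + 1), f k = (∑ k ∈ Finset.range L, f (k + 1)) + f 0 :=
      Finset.sum_range_succ' f L
    have e2 : ∑ k ∈ Finset.range (L + 1), f k = (∑ k ∈ Finset.range L, f k) + f L :=
      Finset.sum_range_succ f L
    have e3 : ∀ k, f (1 + k) = f (k + 1) := fun k => by rw [add_comm]
    have e4 : f 0 = 0 := by simp [hf]
    have e5 : f L = (L : ℂ) * g 0 := by rw [hf]; simp only [hL0]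
    calc ∑ k ∈ Finset.range L, f (1 + k) = ∑ k ∈ Finset.range L, f (k + 1) :=
          Finset.sum_congr rfl fun k _ => e3 k
      _ = (∑ k ∈ Finset.range L, f k) + f L := by
          have := e1.symm.trans e2
          rw [e4, add_zero] at this
          exact this
      _ = (∑ k ∈ Finset.range L, f k) + (L : ℂ) * g 0 := by rw [e5]
  have hsum : ∑ i : Fin L, g i = Gf twoS L x - (L : ℂ) * ((spin twoS : ℝ) : ℂ) := by
    rw [hg]
    rw [Finset.sum_sub_distrib, Finset.sum_const, Finset.card_univ, Fintype.card_fin]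
    simp [Gf, nsmul_eq_mul]
  rw [h1, h2, hc2, hc1, hsum, hg]
  ring

lemma szT_mulVec (twoS L : ℕ) (φ : Conf twoS L → ℂ) (x : Conf twoS L) :
    (SzT twoS L).mulVec φ x = Gf twoS L x * φ x := by
  rw [szT_diag]
  exact Matrix.mulVec_diagonal _ _ _

/-- twisting shifts the wavenumber by `∓2πM/L + 2πS` and preserves the
magnetization. -/
theorem twist_shifts_wavenumber (twoS L : ℕ) [NeZero L]
    (hS : 0 < twoS) (hL4 : 4 ≤ L) (hLeven : Even L)
    (ψ : Conf twoS L → ℂ) (M q : ℝ)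
    (hψq : (Utrl twoS L).mulVec ψ = Complex.exp (Complex.I * (q : ℂ)) • ψ)
    (hψM : (SzT twoS L).mulVec ψ = ((M : ℝ) : ℂ) • ψ) :
    ∀ ε : ℝ, (ε = 1 ∨ ε = -1) →
      (Utrl twoS L).mulVec ((Utw twoS L ε).mulVec ψ) =
        Complex.exp (Complex.I *
            ((q - ε * (2 * Real.pi) * M / L + 2 * Real.pi * spin twoS : ℝ) : ℂ)) •
          (Utw twoS L ε).mulVec ψ ∧
      (SzT twoS L).mulVec ((Utw twoS L ε).mulVec ψ) =
        ((M : ℝ) : ℂ) • (Utw twoS L ε).mulVec ψ := by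
  intro ε hε
  set c : ℂ := -(ε : ℂ) * ((2 * Real.pi / L : ℝ) : ℂ) * Complex.I with hc
  have hUtwpt : ∀ x : Conf twoS L,
      (Utw twoS L ε).mulVec ψ x = Complex.exp (c * Ff twoS L x) * ψ x := by
    intro x
    rw [utw_diag]
    exact Matrix.mulVec_diagonal _ _ _
  have hSzpt : ∀ x, Gf twoS L x * ψ x = ((M : ℝ) : ℂ) * ψ x := by
    intro x
    have h := congrFun hψM x
    rw [szT_mulVec] at h
    simpa using h
  have hGpt : ∀ x, Complex.exp (c * Gf twoS L x) * ψ x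
      = Complex.exp (c * ((M : ℝ) : ℂ)) * ψ x := by
    intro x
    by_cases h0 : ψ x = 0
    · simp [h0]
    · have hGx : Gf twoS L x = ((M : ℝ) : ℂ) := mul_right_cancel₀ h0 (hSzpt x)
      rw [hGx]
  have hqpt : ∀ x : Conf twoS L,
      ψ (fun i => x (i - 1)) = Complex.exp (Complex.I * (q : ℂ)) * ψ x := by
    intro x
    have h := congrFun hψq x
    rw [utrl_mulVec] at h
    simpa using h
  have hLne : (L : ℂ) ≠ 0 := Nat.cast_ne_zero.mpr (NeZero.ne L)
  have hpi : ((2 * Real.pi / L : ℝ) : ℂ) = 2 * (Real.pi : ℂ) / (L : ℂ) := by push_cast; ring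
  have hspin : ((spin twoS : ℝ) : ℂ) = (twoS : ℂ) / 2 := by
    simp only [spin]; push_cast; ring
  constructor
  · funext x
    rw [utrl_mulVec, hUtwpt, Pi.smul_apply, hUtwpt, smul_eq_mul]
    rw [Ff_shift, hqpt]
    set k : ℕ := ((x 0 : Fin (N twoS)) : ℕ) with hk
    have hm : ((mval twoS (x 0) : ℝ) : ℂ) - ((spin twoS : ℝ) : ℂ) = -(k : ℂ) := by
      simp only [mval]
      push_cast
      ring
    rw [hm]
    have hsplit : c * (Ff twoS L x + Gf twoS L x - (L : ℂ) * ((spin twoS : ℝ) : ℂ)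
          - (L : ℂ) * (-(k : ℂ)))
        = (c * Ff twoS L x) + ((c * Gf twoS L x)
          + (-(c * (L : ℂ) * ((spin twoS : ℝ) : ℂ)) + c * (L : ℂ) * (k : ℂ))) := by ring
    rw [hsplit, Complex.exp_add, Complex.exp_add, Complex.exp_add]
    set E : ℂ := Complex.exp (-(c * (L : ℂ) * ((spin twoS : ℝ) : ℂ)))
      * Complex.exp (c * (L : ℂ) * (k : ℂ)) with hE
    have key : E * Complex.exp (Complex.I * (q : ℂ)) * Complex.exp (c * ((M : ℝ) : ℂ))
        = Complex.exp (Complex.I *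
            ((q - ε * (2 * Real.pi) * M / L + 2 * Real.pi * spin twoS : ℝ) : ℂ)) := by
      rw [hE, ← Complex.exp_add, ← Complex.exp_add, ← Complex.exp_add]
      have hθ : ((q - ε * (2 * Real.pi) * M / L + 2 * Real.pi * spin twoS : ℝ) : ℂ)
          = (q : ℂ) - (ε : ℂ) * (2 * (Real.pi : ℂ)) * (M : ℂ) / (L : ℂ)
            + 2 * (Real.pi : ℂ) * ((spin twoS : ℝ) : ℂ) := by push_cast; ring
      rcases hε with rfl | rfl
      · have harg : -(c * (L : ℂ) * ((spin twoS : ℝ) : ℂ)) + c * (L : ℂ) * (k : ℂ)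
              + Complex.I * (q : ℂ) + c * ((M : ℝ) : ℂ)
            = Complex.I * ((q : ℂ) - (1 : ℂ) * (2 * (Real.pi : ℂ)) * (M : ℂ) / (L : ℂ)
                + 2 * (Real.pi : ℂ) * ((spin twoS : ℝ) : ℂ))
              + ((-(k : ℤ) : ℤ) : ℂ) * (2 * (Real.pi : ℂ) * Complex.I) := by
          rw [hc, hpi]
          push_cast
          field_simp
          ring
        rw [harg, Complex.exp_add, Complex.exp_int_mul_two_pi_mul_I, mul_one, hθ]
        norm_num
      · have harg : -(c * (L : ℂ) * ((spin twoS : ℝ) : ℂ)) + c * (L : ℂ) * (k : ℂ)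
              + Complex.I * (q : ℂ) + c * ((M : ℝ) : ℂ)
            = Complex.I * ((q : ℂ) - (-1 : ℂ) * (2 * (Real.pi : ℂ)) * (M : ℂ) / (L : ℂ)
                + 2 * (Real.pi : ℂ) * ((spin twoS : ℝ) : ℂ))
              + (((k : ℤ) - (twoS : ℤ) : ℤ) : ℂ) * (2 * (Real.pi : ℂ) * Complex.I) := by
          rw [hc, hpi, hspin]
          push_cast
          field_simp
          ring
        rw [harg, Complex.exp_add, Complex.exp_int_mul_two_pi_mul_I, mul_one, hθ]
        norm_num
    calc Complex.exp (c * Ff twoS L x) * (Complex.exp (c * Gf twoS L x) * E)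
          * (Complex.exp (Complex.I * (q : ℂ)) * ψ x)
        = (Complex.exp (c * Ff twoS L x) * E * Complex.exp (Complex.I * (q : ℂ)))
            * (Complex.exp (c * Gf twoS L x) * ψ x) := by ring
      _ = (Complex.exp (c * Ff twoS L x) * E * Complex.exp (Complex.I * (q : ℂ)))
            * (Complex.exp (c * ((M : ℝ) : ℂ)) * ψ x) := by rw [hGpt]
      _ = (E * Complex.exp (Complex.I * (q : ℂ)) * Complex.exp (c * ((M : ℝ) : ℂ)))
            * (Complex.exp (c * Ff twoS L x) * ψ x) := by ring
      _ = Complex.exp (Complex.I *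
            ((q - ε * (2 * Real.pi) * M / L + 2 * Real.pi * spin twoS : ℝ) : ℂ))
            * (Complex.exp (c * Ff twoS L x) * ψ x) := by rw [key]
  · funext x
    rw [szT_mulVec, hUtwpt, Pi.smul_apply, hUtwpt, smul_eq_mul]
    calc Gf twoS L x * (Complex.exp (c * Ff twoS L x) * ψ x)
        = Complex.exp (c * Ff twoS L x) * (Gf twoS L x * ψ x) := by ring
      _ = Complex.exp (c * Ff twoS L x) * (((M : ℝ) : ℂ) * ψ x) := by rw [hSzpt]
      _ = ((M : ℝ) : ℂ) * (Complex.exp (c * Ff twoS L x) * ψ x) := by ring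

end LSM
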